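/- (Entropic bilocality inequality, class 7.) Let A₀, A₁, B, C₀, C₁ be jointly distributed random variables taking values in finite sets such that the pair (A₀,A₁) is independent of the pair (C₀,C₁), i.e. H(A₀A₁C₀C₁) = H(A₀A₁) + H(C₀C₁). Then H(A₀) + H(C₀) + H(A₁BC₁) ≤ H(A₀BC₁) + H(A₁BC₀). -/

import Mathlib

/-- Shannon entropy (in bits) of a finitely supported weight function,
with the convention `0 * logb 2 0 = 0` (automatic since `Real.logb 2 0 = 0`). -/
noncomputable def shannonEntropy {β : Type*} [Fintype β] (q : β → ℝ) : ℝ :=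
  -∑ b, q b * Real.logb 2 (q b)

/-- Joint Shannon entropy of a random variable `X` on a finite probability space
with weights `p`. -/
noncomputable def jointEntropy {Ω β : Type*} [Fintype Ω] [Fintype β] [DecidableEq β]
    (p : Ω → ℝ) (X : Ω → β) : ℝ :=
  shannonEntropy (fun b => ∑ ω ∈ Finset.univ.filter (fun ω => X ω = b), p ω)

namespace EntropicAux

variable {Ω : Type*} [Fintype Ω] (p : Ω → ℝ)

/-- marginal weight of `X` at `b`. -/
noncomputable def marg {β : Type*} [Fintype β] [DecidableEq β] (X : Ω → β) (b : β) : ℝ :=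
  ∑ ω ∈ Finset.univ.filter (fun ω => X ω = b), p ω

variable {β β' : Type*} [Fintype β] [DecidableEq β] [Fintype β'] [DecidableEq β']

lemma marg_nonneg (hp0 : ∀ ω, 0 ≤ p ω) (X : Ω → β) (b : β) : 0 ≤ marg p X b :=
  Finset.sum_nonneg fun ω _ => hp0 ω

lemma le_marg (hp0 : ∀ ω, 0 ≤ p ω) (X : Ω → β) (ω : Ω) : p ω ≤ marg p X (X ω) :=
  Finset.single_le_sum (f := p) (fun i _ => hp0 i) (by simp)

lemma sum_marg (X : Ω → β) : ∑ b, marg p X b = ∑ ω, p ω :=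
  Finset.sum_fiberwise _ X p

/-- Key representation of joint entropy as a sum over the sample space. -/
lemma jointEntropy_eq_sum (X : Ω → β) :
    jointEntropy p X = -∑ ω, p ω * Real.logb 2 (marg p X (X ω)) := by
  rw [jointEntropy, shannonEntropy]
  congr 1
  rw [← Finset.sum_fiberwise Finset.univ X (fun ω => p ω * Real.logb 2 (marg p X (X ω)))]
  refine Finset.sum_congr rfl fun b _ => ?_
  rw [show (∑ ω ∈ Finset.univ.filter (fun ω => X ω = b), p ω) = marg p X b from rfl,
    marg, Finset.sum_mul]
  refine Finset.sum_congr rfl fun ω hω => ?_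
  rw [(Finset.mem_filter.mp hω).2]; rfl

lemma jointEntropy_congr (X : Ω → β) (Y : Ω → β')
    (h : ∀ ω ω', X ω = X ω' ↔ Y ω = Y ω') :
    jointEntropy p X = jointEntropy p Y := by
  rw [jointEntropy_eq_sum, jointEntropy_eq_sum]
  congr 1
  refine Finset.sum_congr rfl fun ω _ => ?_
  have : marg p X (X ω) = marg p Y (Y ω) := by
    refine Finset.sum_congr ?_ fun _ _ => rfl
    ext ω'
    simp only [Finset.mem_filter, Finset.mem_univ, true_and]
    exact h ω' ω
  rw [this]

lemma jointEntropy_mono (hp0 : ∀ ω, 0 ≤ p ω) (X : Ω → β) (Y : Ω → β') :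
    jointEntropy p X ≤ jointEntropy p (fun ω => (X ω, Y ω)) := by
  rw [jointEntropy_eq_sum, jointEntropy_eq_sum]
  apply neg_le_neg
  refine Finset.sum_le_sum fun ω _ => ?_
  rcases eq_or_lt_of_le (hp0 ω) with h0 | hpos
  · simp [← h0]
  · refine mul_le_mul_of_nonneg_left ?_ (le_of_lt hpos)
    have hle : marg p (fun ω => (X ω, Y ω)) (X ω, Y ω) ≤ marg p X (X ω) := by
      refine Finset.sum_le_sum_of_subset_of_nonneg ?_ (fun i _ _ => hp0 i)
      intro ω' hω'
      simp only [Finset.mem_filter, Finset.mem_univ, true_and, Prod.mk.injEq] at hω' ⊢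
      exact hω'.1
    have hpos' : 0 < marg p (fun ω => (X ω, Y ω)) (X ω, Y ω) :=
      lt_of_lt_of_le hpos (le_marg p hp0 _ ω)
    exact Real.logb_le_logb_of_le (by norm_num) hpos' hle

lemma marg_fst {ζ : Type*} [Fintype ζ] [DecidableEq ζ] (X : Ω → β) (Z : Ω → ζ) (z : ζ) :
    ∑ x, marg p (fun ω => (X ω, Z ω)) (x, z) = marg p Z z := by
  rw [show marg p Z z = ∑ ω ∈ Finset.univ.filter (fun ω => Z ω = z), p ω from rfl,
    ← Finset.sum_fiberwise (Finset.univ.filter fun ω => Z ω = z) X p]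
  refine Finset.sum_congr rfl fun x _ => ?_
  refine Finset.sum_congr ?_ fun _ _ => rfl
  ext ω
  simp only [Finset.mem_filter, Finset.mem_univ, true_and, Prod.mk.injEq]
  tauto

end EntropicAux

namespace EntropicAux

variable {Ω : Type*} [Fintype Ω] (p : Ω → ℝ)

lemma sum_logb (f g : Ω → ℝ) :
    ∑ ω, f ω * Real.logb 2 (g ω) = (∑ ω, f ω * Real.log (g ω)) / Real.log 2 := by
  rw [Finset.sum_div]
  exact Finset.sum_congr rfl fun ω _ => by rw [Real.logb, mul_div_assoc]

/-- Strong subadditivity / submodularity of joint Shannon entropy. -/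
lemma ssa {σ τ ζ : Type*} [Fintype σ] [DecidableEq σ] [Fintype τ] [DecidableEq τ]
    [Fintype ζ] [DecidableEq ζ]
    (hp0 : ∀ ω, 0 ≤ p ω) (X : Ω → σ) (Y : Ω → τ) (Z : Ω → ζ) :
    jointEntropy p (fun ω => (X ω, Y ω, Z ω)) + jointEntropy p Z ≤
    jointEntropy p (fun ω => (X ω, Z ω)) + jointEntropy p (fun ω => (Y ω, Z ω)) := by
  classical
  set mW := marg p (fun ω => (X ω, Y ω, Z ω)) with hmW
  set mXZ := marg p (fun ω => (X ω, Z ω)) with hmXZ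
  set mYZ := marg p (fun ω => (Y ω, Z ω)) with hmYZ
  set mZ := marg p Z with hmZ
  set r : Ω → ℝ := fun ω =>
    mXZ (X ω, Z ω) * mYZ (Y ω, Z ω) / (mW (X ω, Y ω, Z ω) * mZ (Z ω)) with hr
  -- Step 1: pointwise log-sum bound
  have step1 : ∀ ω ∈ Finset.univ (α := Ω),
      p ω * Real.log (mXZ (X ω, Z ω)) + p ω * Real.log (mYZ (Y ω, Z ω))
        - p ω * Real.log (mW (X ω, Y ω, Z ω)) - p ω * Real.log (mZ (Z ω))
        ≤ p ω * r ω - p ω := by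
    intro ω _
    rcases eq_or_lt_of_le (hp0 ω) with h0 | hpos
    · simp [← h0]
    · have h1 : 0 < mXZ (X ω, Z ω) := lt_of_lt_of_le hpos (le_marg p hp0 _ ω)
      have h2 : 0 < mYZ (Y ω, Z ω) := lt_of_lt_of_le hpos (le_marg p hp0 _ ω)
      have h3 : 0 < mW (X ω, Y ω, Z ω) := lt_of_lt_of_le hpos (le_marg p hp0 _ ω)
      have h4 : 0 < mZ (Z ω) := lt_of_lt_of_le hpos (le_marg p hp0 Z ω)
      have hrpos : 0 < r ω := div_pos (mul_pos h1 h2) (mul_pos h3 h4)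
      have hlog : Real.log (r ω) ≤ r ω - 1 := Real.log_le_sub_one_of_pos hrpos
      have hlogeq : Real.log (r ω) =
          Real.log (mXZ (X ω, Z ω)) + Real.log (mYZ (Y ω, Z ω))
            - Real.log (mW (X ω, Y ω, Z ω)) - Real.log (mZ (Z ω)) := by
        rw [hr]
        rw [Real.log_div (by positivity) (by positivity),
          Real.log_mul (ne_of_gt h1) (ne_of_gt h2),
          Real.log_mul (ne_of_gt h3) (ne_of_gt h4)]
        ring
      have := mul_le_mul_of_nonneg_left hlog (le_of_lt hpos)
      rw [hlogeq] at this
      nlinarith [this]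
  -- Step 2: the expectation of r is at most total mass
  have step2 : ∑ ω, p ω * r ω ≤ ∑ ω, p ω := by
    have grp : ∑ ω, p ω * r ω = ∑ b : σ × τ × ζ,
        mW b * (mXZ (b.1, b.2.2) * mYZ (b.2.1, b.2.2) / (mW b * mZ b.2.2)) := by
      rw [← Finset.sum_fiberwise Finset.univ (fun ω => (X ω, Y ω, Z ω))
        (fun ω => p ω * r ω)]
      refine Finset.sum_congr rfl fun b _ => ?_
      rw [show mW b = ∑ ω ∈ Finset.univ.filter (fun ω => (X ω, Y ω, Z ω) = b), p ω from rfl,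
        Finset.sum_mul]
      refine Finset.sum_congr rfl fun ω hω => ?_
      have hb : (X ω, Y ω, Z ω) = b := (Finset.mem_filter.mp hω).2
      simp only [hr, ← hb]; rfl
    have per_b : ∀ b : σ × τ × ζ,
        mW b * (mXZ (b.1, b.2.2) * mYZ (b.2.1, b.2.2) / (mW b * mZ b.2.2)) ≤
          mXZ (b.1, b.2.2) * mYZ (b.2.1, b.2.2) / mZ b.2.2 := by
      intro b
      have hnn : 0 ≤ mW b := by rw [hmW]; exact marg_nonneg p hp0 _ b
      rcases eq_or_lt_of_le hnn with h0 | h0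
      · rw [← h0, zero_mul]
        have h1 : 0 ≤ mXZ (b.1, b.2.2) := by rw [hmXZ]; exact marg_nonneg p hp0 _ _
        have h2 : 0 ≤ mYZ (b.2.1, b.2.2) := by rw [hmYZ]; exact marg_nonneg p hp0 _ _
        have h4 : 0 ≤ mZ b.2.2 := by rw [hmZ]; exact marg_nonneg p hp0 Z _
        positivity
      · rw [mul_div_assoc', mul_div_mul_left _ _ (ne_of_gt h0)]
    have hz : ∀ z : ζ, (∑ x, ∑ y, mXZ (x, z) * mYZ (y, z) / mZ z) ≤ mZ z := by
      intro z
      have hx : ∑ x, mXZ (x, z) = mZ z := marg_fst p X Z z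
      have hy : ∑ y, mYZ (y, z) = mZ z := marg_fst p Y Z z
      have key : (∑ x, ∑ y, mXZ (x, z) * mYZ (y, z) / mZ z) =
          (∑ x, mXZ (x, z)) * (∑ y, mYZ (y, z)) / mZ z := by
        rw [Finset.sum_mul_sum, Finset.sum_div]
        exact Finset.sum_congr rfl fun x _ => (Finset.sum_div _ _ _).symm
      rw [key, hx, hy]
      have hnn : 0 ≤ mZ z := by rw [hmZ]; exact marg_nonneg p hp0 Z z
      rcases eq_or_lt_of_le hnn with h0 | h0
      · rw [← h0]; simp
      · rw [mul_div_assoc, div_self (ne_of_gt h0), mul_one]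
    calc ∑ ω, p ω * r ω
        = ∑ b : σ × τ × ζ,
            mW b * (mXZ (b.1, b.2.2) * mYZ (b.2.1, b.2.2) / (mW b * mZ b.2.2)) := grp
      _ ≤ ∑ b : σ × τ × ζ, mXZ (b.1, b.2.2) * mYZ (b.2.1, b.2.2) / mZ b.2.2 :=
          Finset.sum_le_sum fun b _ => per_b b
      _ = ∑ x, ∑ y, ∑ z, mXZ (x, z) * mYZ (y, z) / mZ z := by
          rw [Fintype.sum_prod_type]
          exact Finset.sum_congr rfl fun x _ => Fintype.sum_prod_type ..
      _ = ∑ z, ∑ x, ∑ y, mXZ (x, z) * mYZ (y, z) / mZ z := by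
          rw [show (∑ x, ∑ y, ∑ z, mXZ (x, z) * mYZ (y, z) / mZ z)
              = ∑ x, ∑ z, ∑ y, mXZ (x, z) * mYZ (y, z) / mZ z from
            Finset.sum_congr rfl fun x _ => Finset.sum_comm]
          exact Finset.sum_comm
      _ ≤ ∑ z, mZ z := Finset.sum_le_sum fun z _ => hz z
      _ = ∑ ω, p ω := sum_marg p Z
  -- combine
  have main : ∑ ω, p ω * Real.log (mXZ (X ω, Z ω)) + ∑ ω, p ω * Real.log (mYZ (Y ω, Z ω))
      - ∑ ω, p ω * Real.log (mW (X ω, Y ω, Z ω)) - ∑ ω, p ω * Real.log (mZ (Z ω)) ≤ 0 := by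
    have hsum := Finset.sum_le_sum step1
    rw [Finset.sum_sub_distrib, Finset.sum_sub_distrib, Finset.sum_add_distrib,
      Finset.sum_sub_distrib] at hsum
    linarith [step2, hsum]
  rw [jointEntropy_eq_sum, jointEntropy_eq_sum, jointEntropy_eq_sum, jointEntropy_eq_sum]
  rw [← hmW, ← hmXZ, ← hmYZ, ← hmZ]
  rw [sum_logb, sum_logb, sum_logb, sum_logb]
  have hc : (0:ℝ) < Real.log 2 := Real.log_pos one_lt_two
  rw [← neg_div, ← neg_div, ← neg_div, ← neg_div, ← add_div, ← add_div]
  exact (div_le_div_iff_of_pos_right hc).mpr (by linarith [main])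

end EntropicAux

namespace EntropicAux

variable {Ω : Type*} [Fintype Ω] (p : Ω → ℝ)

lemma subadd {σ τ : Type*} [Fintype σ] [DecidableEq σ] [Fintype τ] [DecidableEq τ]
    (hp0 : ∀ ω, 0 ≤ p ω) (hp1 : ∑ ω, p ω = 1) (X : Ω → σ) (Y : Ω → τ) :
    jointEntropy p (fun ω => (X ω, Y ω)) ≤ jointEntropy p X + jointEntropy p Y := by
  have h : jointEntropy p (fun ω => (X ω, Y ω, (0 : Fin 1)))
      + jointEntropy p (fun _ : Ω => (0 : Fin 1)) ≤
      jointEntropy p (fun ω => (X ω, (0 : Fin 1)))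
      + jointEntropy p (fun ω => (Y ω, (0 : Fin 1))) :=
    ssa p hp0 X Y (fun _ => (0 : Fin 1))
  have hc : jointEntropy p (fun _ : Ω => (0 : Fin 1)) = 0 := by
    rw [jointEntropy_eq_sum]
    have hm : marg p (fun _ : Ω => (0 : Fin 1)) 0 = 1 := by
      rw [show marg p (fun _ : Ω => (0 : Fin 1)) 0
          = ∑ ω ∈ Finset.univ.filter (fun _ => (0 : Fin 1) = 0), p ω from rfl]
      simp [hp1]
    simp [hm]
  have e1 : jointEntropy p (fun ω => (X ω, Y ω, (0 : Fin 1)))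
      = jointEntropy p (fun ω => (X ω, Y ω)) :=
    jointEntropy_congr p _ _ (by intro ω ω'; simp [Prod.ext_iff])
  have e2 : jointEntropy p (fun ω => (X ω, (0 : Fin 1))) = jointEntropy p X :=
    jointEntropy_congr p _ _ (by intro ω ω'; simp [Prod.ext_iff])
  have e3 : jointEntropy p (fun ω => (Y ω, (0 : Fin 1))) = jointEntropy p Y :=
    jointEntropy_congr p _ _ (by intro ω ω'; simp [Prod.ext_iff])
  linarith

end EntropicAux

/-- Entropic bilocality inequality (class 7 of Table II): for jointly distributed
finite random variables `A₀, A₁, B, C₀, C₁` with `(A₀,A₁)` independent of `(C₀,C₁)`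
(in the entropic sense `H(A₀A₁C₀C₁) = H(A₀A₁) + H(C₀C₁)`), one has
`H(A₀) + H(C₀) + H(A₁BC₁) ≤ H(A₀BC₁) + H(A₁BC₀)`. -/
theorem entropic_bilocality_class7 {Ω α₀ α₁ β γ₀ γ₁ : Type*} [Fintype Ω]
    [Fintype α₀] [DecidableEq α₀] [Fintype α₁] [DecidableEq α₁]
    [Fintype β] [DecidableEq β]
    [Fintype γ₀] [DecidableEq γ₀] [Fintype γ₁] [DecidableEq γ₁]
    (p : Ω → ℝ) (hp0 : ∀ ω, 0 ≤ p ω) (hp1 : ∑ ω, p ω = 1)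
    (A₀ : Ω → α₀) (A₁ : Ω → α₁) (B : Ω → β) (C₀ : Ω → γ₀) (C₁ : Ω → γ₁)
    (hind : jointEntropy p (fun ω => (A₀ ω, A₁ ω, C₀ ω, C₁ ω)) =
      jointEntropy p (fun ω => (A₀ ω, A₁ ω)) + jointEntropy p (fun ω => (C₀ ω, C₁ ω))) :
    jointEntropy p A₀ +
      jointEntropy p C₀ +
      jointEntropy p (fun ω => (A₁ ω, B ω, C₁ ω)) ≤
      jointEntropy p (fun ω => (A₀ ω, B ω, C₁ ω)) +
      jointEntropy p (fun ω => (A₁ ω, B ω, C₀ ω)) := by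
  -- S1
  have hS1 : jointEntropy p (fun ω => (A₀ ω, A₁ ω, B ω, C₁ ω))
      + jointEntropy p (fun ω => (A₀ ω, C₁ ω)) ≤
      jointEntropy p (fun ω => (A₀ ω, B ω, C₁ ω))
      + jointEntropy p (fun ω => (A₀ ω, A₁ ω, C₁ ω)) := by
    have h : jointEntropy p (fun ω => (B ω, A₁ ω, A₀ ω, C₁ ω))
        + jointEntropy p (fun ω => (A₀ ω, C₁ ω)) ≤
        jointEntropy p (fun ω => (B ω, A₀ ω, C₁ ω))
        + jointEntropy p (fun ω => (A₁ ω, A₀ ω, C₁ ω)) :=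
      EntropicAux.ssa p hp0 B A₁ (fun ω => (A₀ ω, C₁ ω))
    have e1 : jointEntropy p (fun ω => (B ω, A₁ ω, A₀ ω, C₁ ω))
        = jointEntropy p (fun ω => (A₀ ω, A₁ ω, B ω, C₁ ω)) :=
      EntropicAux.jointEntropy_congr p _ _ (by intro ω ω'; simp [Prod.ext_iff]; tauto)
    have e2 : jointEntropy p (fun ω => (B ω, A₀ ω, C₁ ω))
        = jointEntropy p (fun ω => (A₀ ω, B ω, C₁ ω)) :=
      EntropicAux.jointEntropy_congr p _ _ (by intro ω ω'; simp [Prod.ext_iff]; tauto)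
    have e3 : jointEntropy p (fun ω => (A₁ ω, A₀ ω, C₁ ω))
        = jointEntropy p (fun ω => (A₀ ω, A₁ ω, C₁ ω)) :=
      EntropicAux.jointEntropy_congr p _ _ (by intro ω ω'; simp [Prod.ext_iff]; tauto)
    linarith
  -- S2
  have hS2 : jointEntropy p (fun ω => (A₀ ω, A₁ ω, C₁ ω)) + jointEntropy p A₀ ≤
      jointEntropy p (fun ω => (A₀ ω, C₁ ω)) + jointEntropy p (fun ω => (A₀ ω, A₁ ω)) := by
    have h : jointEntropy p (fun ω => (C₁ ω, A₁ ω, A₀ ω)) + jointEntropy p A₀ ≤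
        jointEntropy p (fun ω => (C₁ ω, A₀ ω)) + jointEntropy p (fun ω => (A₁ ω, A₀ ω)) :=
      EntropicAux.ssa p hp0 C₁ A₁ A₀
    have e1 : jointEntropy p (fun ω => (C₁ ω, A₁ ω, A₀ ω))
        = jointEntropy p (fun ω => (A₀ ω, A₁ ω, C₁ ω)) :=
      EntropicAux.jointEntropy_congr p _ _ (by intro ω ω'; simp [Prod.ext_iff]; tauto)
    have e2 : jointEntropy p (fun ω => (C₁ ω, A₀ ω))
        = jointEntropy p (fun ω => (A₀ ω, C₁ ω)) :=
      EntropicAux.jointEntropy_congr p _ _ (by intro ω ω'; simp [Prod.ext_iff]; tauto)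
    have e3 : jointEntropy p (fun ω => (A₁ ω, A₀ ω))
        = jointEntropy p (fun ω => (A₀ ω, A₁ ω)) :=
      EntropicAux.jointEntropy_congr p _ _ (by intro ω ω'; simp [Prod.ext_iff]; tauto)
    linarith
  -- S3
  have hS3 : jointEntropy p (fun ω => (A₀ ω, A₁ ω, C₀ ω, C₁ ω)) + jointEntropy p C₁ ≤
      jointEntropy p (fun ω => (A₀ ω, A₁ ω, C₁ ω)) + jointEntropy p (fun ω => (C₀ ω, C₁ ω)) := by
    have h : jointEntropy p (fun ω => ((A₀ ω, A₁ ω), C₀ ω, C₁ ω)) + jointEntropy p C₁ ≤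
        jointEntropy p (fun ω => ((A₀ ω, A₁ ω), C₁ ω))
        + jointEntropy p (fun ω => (C₀ ω, C₁ ω)) :=
      EntropicAux.ssa p hp0 (fun ω => (A₀ ω, A₁ ω)) C₀ C₁
    have e1 : jointEntropy p (fun ω => ((A₀ ω, A₁ ω), C₀ ω, C₁ ω))
        = jointEntropy p (fun ω => (A₀ ω, A₁ ω, C₀ ω, C₁ ω)) :=
      EntropicAux.jointEntropy_congr p _ _ (by intro ω ω'; simp [Prod.ext_iff]; tauto)
    have e2 : jointEntropy p (fun ω => ((A₀ ω, A₁ ω), C₁ ω))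
        = jointEntropy p (fun ω => (A₀ ω, A₁ ω, C₁ ω)) :=
      EntropicAux.jointEntropy_congr p _ _ (by intro ω ω'; simp [Prod.ext_iff]; tauto)
    linarith
  -- S4
  have hS4 : jointEntropy p (fun ω => (A₁ ω, B ω, C₀ ω, C₁ ω))
      + jointEntropy p (fun ω => (A₁ ω, C₀ ω)) ≤
      jointEntropy p (fun ω => (A₁ ω, B ω, C₀ ω))
      + jointEntropy p (fun ω => (A₁ ω, C₀ ω, C₁ ω)) := by
    have h : jointEntropy p (fun ω => (B ω, C₁ ω, A₁ ω, C₀ ω))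
        + jointEntropy p (fun ω => (A₁ ω, C₀ ω)) ≤
        jointEntropy p (fun ω => (B ω, A₁ ω, C₀ ω))
        + jointEntropy p (fun ω => (C₁ ω, A₁ ω, C₀ ω)) :=
      EntropicAux.ssa p hp0 B C₁ (fun ω => (A₁ ω, C₀ ω))
    have e1 : jointEntropy p (fun ω => (B ω, C₁ ω, A₁ ω, C₀ ω))
        = jointEntropy p (fun ω => (A₁ ω, B ω, C₀ ω, C₁ ω)) :=
      EntropicAux.jointEntropy_congr p _ _ (by intro ω ω'; simp [Prod.ext_iff]; tauto)
    have e2 : jointEntropy p (fun ω => (B ω, A₁ ω, C₀ ω))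
        = jointEntropy p (fun ω => (A₁ ω, B ω, C₀ ω)) :=
      EntropicAux.jointEntropy_congr p _ _ (by intro ω ω'; simp [Prod.ext_iff]; tauto)
    have e3 : jointEntropy p (fun ω => (C₁ ω, A₁ ω, C₀ ω))
        = jointEntropy p (fun ω => (A₁ ω, C₀ ω, C₁ ω)) :=
      EntropicAux.jointEntropy_congr p _ _ (by intro ω ω'; simp [Prod.ext_iff]; tauto)
    linarith
  -- S5
  have hS5 : jointEntropy p (fun ω => (A₁ ω, C₀ ω, C₁ ω)) + jointEntropy p C₀ ≤
      jointEntropy p (fun ω => (A₁ ω, C₀ ω)) + jointEntropy p (fun ω => (C₀ ω, C₁ ω)) := by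
    have h : jointEntropy p (fun ω => (A₁ ω, C₁ ω, C₀ ω)) + jointEntropy p C₀ ≤
        jointEntropy p (fun ω => (A₁ ω, C₀ ω)) + jointEntropy p (fun ω => (C₁ ω, C₀ ω)) :=
      EntropicAux.ssa p hp0 A₁ C₁ C₀
    have e1 : jointEntropy p (fun ω => (A₁ ω, C₁ ω, C₀ ω))
        = jointEntropy p (fun ω => (A₁ ω, C₀ ω, C₁ ω)) :=
      EntropicAux.jointEntropy_congr p _ _ (by intro ω ω'; simp [Prod.ext_iff]; tauto)
    have e2 : jointEntropy p (fun ω => (C₁ ω, C₀ ω))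
        = jointEntropy p (fun ω => (C₀ ω, C₁ ω)) :=
      EntropicAux.jointEntropy_congr p _ _ (by intro ω ω'; simp [Prod.ext_iff]; tauto)
    linarith
  -- S6
  have hS6 : jointEntropy p (fun ω => (A₀ ω, A₁ ω, C₀ ω, C₁ ω)) + jointEntropy p A₁ ≤
      jointEntropy p (fun ω => (A₁ ω, C₀ ω, C₁ ω)) + jointEntropy p (fun ω => (A₀ ω, A₁ ω)) := by
    have h : jointEntropy p (fun ω => ((C₀ ω, C₁ ω), A₀ ω, A₁ ω)) + jointEntropy p A₁ ≤
        jointEntropy p (fun ω => ((C₀ ω, C₁ ω), A₁ ω))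
        + jointEntropy p (fun ω => (A₀ ω, A₁ ω)) :=
      EntropicAux.ssa p hp0 (fun ω => (C₀ ω, C₁ ω)) A₀ A₁
    have e1 : jointEntropy p (fun ω => ((C₀ ω, C₁ ω), A₀ ω, A₁ ω))
        = jointEntropy p (fun ω => (A₀ ω, A₁ ω, C₀ ω, C₁ ω)) :=
      EntropicAux.jointEntropy_congr p _ _ (by intro ω ω'; simp [Prod.ext_iff]; tauto)
    have e2 : jointEntropy p (fun ω => ((C₀ ω, C₁ ω), A₁ ω))
        = jointEntropy p (fun ω => (A₁ ω, C₀ ω, C₁ ω)) :=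
      EntropicAux.jointEntropy_congr p _ _ (by intro ω ω'; simp [Prod.ext_iff]; tauto)
    linarith
  -- S7
  have hS7 : jointEntropy p (fun ω => (A₀ ω, A₁ ω, C₁ ω)) ≤
      jointEntropy p (fun ω => (A₀ ω, A₁ ω)) + jointEntropy p C₁ := by
    have h : jointEntropy p (fun ω => ((A₀ ω, A₁ ω), C₁ ω)) ≤
        jointEntropy p (fun ω => (A₀ ω, A₁ ω)) + jointEntropy p C₁ :=
      EntropicAux.subadd p hp0 hp1 (fun ω => (A₀ ω, A₁ ω)) C₁
    have e1 : jointEntropy p (fun ω => ((A₀ ω, A₁ ω), C₁ ω))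
        = jointEntropy p (fun ω => (A₀ ω, A₁ ω, C₁ ω)) :=
      EntropicAux.jointEntropy_congr p _ _ (by intro ω ω'; simp [Prod.ext_iff]; tauto)
    linarith
  -- S8
  have hS8 : jointEntropy p (fun ω => (A₁ ω, C₀ ω, C₁ ω)) ≤
      jointEntropy p (fun ω => (C₀ ω, C₁ ω)) + jointEntropy p A₁ := by
    have h : jointEntropy p (fun ω => ((C₀ ω, C₁ ω), A₁ ω)) ≤
        jointEntropy p (fun ω => (C₀ ω, C₁ ω)) + jointEntropy p A₁ :=
      EntropicAux.subadd p hp0 hp1 (fun ω => (C₀ ω, C₁ ω)) A₁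
    have e1 : jointEntropy p (fun ω => ((C₀ ω, C₁ ω), A₁ ω))
        = jointEntropy p (fun ω => (A₁ ω, C₀ ω, C₁ ω)) :=
      EntropicAux.jointEntropy_congr p _ _ (by intro ω ω'; simp [Prod.ext_iff]; tauto)
    linarith
  -- M9
  have hM9 : jointEntropy p (fun ω => (A₀ ω, A₁ ω, C₀ ω, C₁ ω)) ≤
      jointEntropy p (fun ω => (A₀ ω, A₁ ω, B ω, C₀ ω, C₁ ω)) := by
    have h : jointEntropy p (fun ω => (A₀ ω, A₁ ω, C₀ ω, C₁ ω)) ≤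
        jointEntropy p (fun ω => ((A₀ ω, A₁ ω, C₀ ω, C₁ ω), B ω)) :=
      EntropicAux.jointEntropy_mono p hp0 (fun ω => (A₀ ω, A₁ ω, C₀ ω, C₁ ω)) B
    have e1 : jointEntropy p (fun ω => ((A₀ ω, A₁ ω, C₀ ω, C₁ ω), B ω))
        = jointEntropy p (fun ω => (A₀ ω, A₁ ω, B ω, C₀ ω, C₁ ω)) :=
      EntropicAux.jointEntropy_congr p _ _ (by intro ω ω'; simp [Prod.ext_iff]; tauto)
    linarith
  -- S10
  have hS10 : jointEntropy p (fun ω => (A₀ ω, A₁ ω, B ω, C₀ ω, C₁ ω))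
      + jointEntropy p (fun ω => (A₁ ω, B ω, C₁ ω)) ≤
      jointEntropy p (fun ω => (A₀ ω, A₁ ω, B ω, C₁ ω))
      + jointEntropy p (fun ω => (A₁ ω, B ω, C₀ ω, C₁ ω)) := by
    have h : jointEntropy p (fun ω => (A₀ ω, C₀ ω, A₁ ω, B ω, C₁ ω))
        + jointEntropy p (fun ω => (A₁ ω, B ω, C₁ ω)) ≤
        jointEntropy p (fun ω => (A₀ ω, A₁ ω, B ω, C₁ ω))
        + jointEntropy p (fun ω => (C₀ ω, A₁ ω, B ω, C₁ ω)) :=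
      EntropicAux.ssa p hp0 A₀ C₀ (fun ω => (A₁ ω, B ω, C₁ ω))
    have e1 : jointEntropy p (fun ω => (A₀ ω, C₀ ω, A₁ ω, B ω, C₁ ω))
        = jointEntropy p (fun ω => (A₀ ω, A₁ ω, B ω, C₀ ω, C₁ ω)) :=
      EntropicAux.jointEntropy_congr p _ _ (by intro ω ω'; simp [Prod.ext_iff]; tauto)
    have e2 : jointEntropy p (fun ω => (C₀ ω, A₁ ω, B ω, C₁ ω))
        = jointEntropy p (fun ω => (A₁ ω, B ω, C₀ ω, C₁ ω)) :=
      EntropicAux.jointEntropy_congr p _ _ (by intro ω ω'; simp [Prod.ext_iff]; tauto)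
    linarith
  linarith [hS1, hS2, hS3, hS4, hS5, hS6, hS7, hS8, hM9, hS10, hind]
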